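/- Let α, δ > 0 and 0 < β < 1. For a state Q = (p, u, c, v) ∈ ℝ⁴ with c ∈ [−1, 1], let Df(Q) be the 4×4 real matrix with rows (0, 1/α, 0, 0), (1, (3/2)u, G′(c), 0), (0, c, u, 1), (0, 0, (1/δ)(W″(c) + 1/β), 0), where G′(c) = c·W″(c) + c/β and W″(c) = 3c² − 1. Then Df(Q) is diagonalizable over ℝ: all its eigenvalues λ₁(Q), …, λ₄(Q) are real and there exist corresponding eigenvectors r₁(Q), …, r₄(Q) that span ℝ⁴ (equivalently, there exist an invertible real 4×4 matrix P and a real diagonal matrix D with Df(Q) = P D P⁻¹). -/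

import Mathlib

open Matrix Real

/-- If `A = T * M * S` with `T * S = 1`, `S * T = 1` and `M` real symmetric, then
`A` is diagonalizable over `ℝ`. -/
theorem diag_of_symmetrizer (T S M A : Matrix (Fin 4) (Fin 4) ℝ)
    (hTS : T * S = 1) (hST : S * T = 1) (hM : M.IsHermitian) (hA : A = T * M * S) :
    ∃ (P : Matrix (Fin 4) (Fin 4) ℝ) (D : Fin 4 → ℝ),
      IsUnit P.det ∧ A = P * Matrix.diagonal D * P⁻¹ := by
  set U : Matrix (Fin 4) (Fin 4) ℝ := (hM.eigenvectorUnitary : Matrix (Fin 4) (Fin 4) ℝ) with hU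
  have hUU : U * star U = 1 := (Matrix.mem_unitaryGroup_iff).mp hM.eigenvectorUnitary.2
  have hUU' : star U * U = 1 := (Matrix.mem_unitaryGroup_iff').mp hM.eigenvectorUnitary.2
  have key : (T * U) * (star U * S) = 1 := by
    calc (T * U) * (star U * S) = T * (U * star U) * S := by noncomm_ring
    _ = T * S := by rw [hUU, mul_one]
    _ = 1 := hTS
  have key2 : (star U * S) * (T * U) = 1 := by
    calc (star U * S) * (T * U) = star U * (S * T) * U := by noncomm_ring
    _ = star U * U := by rw [hST, mul_one]
    _ = 1 := hUU'
  refine ⟨T * U, hM.eigenvalues, ?_, ?_⟩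
  · exact IsUnit.of_mul_eq_one _ (by rw [← Matrix.det_mul, key, Matrix.det_one])
  · have hinv : (T * U)⁻¹ = star U * S := Matrix.inv_eq_right_inv key
    rw [hinv, hA]
    have hd : Matrix.diagonal ((RCLike.ofReal : ℝ → ℝ) ∘ hM.eigenvalues)
        = Matrix.diagonal hM.eigenvalues := by congr 1
    calc T * M * S
        = T * ((hM.eigenvectorUnitary : Matrix (Fin 4) (Fin 4) ℝ)
            * Matrix.diagonal ((RCLike.ofReal : ℝ → ℝ) ∘ hM.eigenvalues)
            * star (hM.eigenvectorUnitary : Matrix (Fin 4) (Fin 4) ℝ)) * S := by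
          have h := hM.spectral_theorem
          rw [Unitary.conjStarAlgAut_apply] at h
          exact congrArg (fun X => T * X * S) h
      _ = T * (U * Matrix.diagonal hM.eigenvalues * star U) * S := by rw [hd, ← hU]
      _ = T * U * Matrix.diagonal hM.eigenvalues * (star U * S) := by noncomm_ring

/-- Hyperbolicity of the one-dimensional first-order sub-system of the relaxed
friction-type approximation of the Navier–Stokes–Cahn–Hilliard system: for
`0 < β < 1` and any state `(p,u,c,v)` with `c ∈ [−1,1]`, the flux Jacobian
`Df(Q)` (with `W″(c) = 3c² − 1` and `G′(c) = c W″(c) + c/β`) is real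
diagonalizable: `Df(Q) = P D P⁻¹` with `P` invertible and `D` real diagonal,
i.e. all eigenvalues are real with eigenvectors spanning `ℝ⁴`. -/
theorem flux_jacobian_real_diagonalizable
    (α β δ : ℝ) (hα : 0 < α) (hδ : 0 < δ) (hβ0 : 0 < β) (hβ1 : β < 1)
    (p u c v : ℝ) (hc : c ∈ Set.Icc (-1 : ℝ) 1)
    (Df : Matrix (Fin 4) (Fin 4) ℝ)
    (hDf : Df =
      !![0, 1 / α, 0, 0;
         1, (3 / 2) * u, c * (3 * c ^ 2 - 1) + c / β, 0;
         0, c, u, 1;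
         0, 0, (1 / δ) * ((3 * c ^ 2 - 1) + 1 / β), 0]) :
    ∃ (P : Matrix (Fin 4) (Fin 4) ℝ) (D : Fin 4 → ℝ),
      IsUnit P.det ∧ Df = P * Matrix.diagonal D * P⁻¹ := by
  have ha0 : (0:ℝ) < 1 / α := by positivity
  have hK0 : (0:ℝ) < (3 * c ^ 2 - 1) + 1 / β := by
    have h1 : (1:ℝ) < 1 / β := (one_lt_one_div hβ0 hβ1)
    nlinarith [sq_nonneg c]
  obtain ⟨x, hx0, hx⟩ : ∃ x : ℝ, 0 < x ∧ x * x = 1 / α :=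
    ⟨Real.sqrt (1/α), Real.sqrt_pos.mpr ha0, Real.mul_self_sqrt ha0.le⟩
  obtain ⟨y, hy0, hy⟩ : ∃ y : ℝ, 0 < y ∧ y * y = (3 * c ^ 2 - 1) + 1 / β :=
    ⟨Real.sqrt _, Real.sqrt_pos.mpr hK0, Real.mul_self_sqrt hK0.le⟩
  obtain ⟨z, hz0, hz⟩ : ∃ z : ℝ, 0 < z ∧ z * z = δ :=
    ⟨Real.sqrt δ, Real.sqrt_pos.mpr hδ, Real.mul_self_sqrt hδ.le⟩
  have hx' := hx0.ne'
  have hy' := hy0.ne'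
  have hz' := hz0.ne'
  have hvTS : (fun i => ![1, x⁻¹, (x*y)⁻¹, (x*z)⁻¹] i * ![1, x, x*y, x*z] i) = fun _ : Fin 4 => (1:ℝ) := by
    funext i
    fin_cases i <;> simp <;> field_simp <;> ring
  have hvST : (fun i => ![1, x, x*y, x*z] i * ![1, x⁻¹, (x*y)⁻¹, (x*z)⁻¹] i) = fun _ : Fin 4 => (1:ℝ) := by
    funext i
    fin_cases i <;> simp <;> field_simp <;> ring
  have hTS : Matrix.diagonal ![1, x⁻¹, (x*y)⁻¹, (x*z)⁻¹] * Matrix.diagonal ![1, x, x*y, x*z] = 1 := by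
    rw [Matrix.diagonal_mul_diagonal, hvTS]
    exact Matrix.diagonal_one
  have hST : Matrix.diagonal ![1, x, x*y, x*z] * Matrix.diagonal ![1, x⁻¹, (x*y)⁻¹, (x*z)⁻¹] = 1 := by
    rw [Matrix.diagonal_mul_diagonal, hvST]
    exact Matrix.diagonal_one
  have hM : (!![0, x, 0, 0;
       x, (3/2)*u, c*y, 0;
       0, c*y, u, y/z;
       0, 0, y/z, 0] : Matrix (Fin 4) (Fin 4) ℝ).IsHermitian := by
    show _ᴴ = _
    ext i j
    fin_cases i <;> fin_cases j <;>
      simp [Matrix.conjTranspose_apply, Matrix.vecHead, Matrix.vecTail]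
  have hA : Df = Matrix.diagonal ![1, x⁻¹, (x*y)⁻¹, (x*z)⁻¹] *
      !![0, x, 0, 0;
         x, (3/2)*u, c*y, 0;
         0, c*y, u, y/z;
         0, 0, y/z, 0] * Matrix.diagonal ![1, x, x*y, x*z] := by
    rw [hDf]
    ext i j
    fin_cases i <;> fin_cases j <;>
      simp [Matrix.mul_apply, Fin.sum_univ_four, Matrix.diagonal_apply,
        Matrix.vecHead, Matrix.vecTail]
    · rw [hx]; norm_num
    · field_simp
    · field_simp
    · rw [show x⁻¹ * (c * y) * (x * y) = c * (y * y) by field_simp, hy]; ring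
    · field_simp
    · field_simp
    · field_simp
    · rw [show z⁻¹ * x⁻¹ * (y / z) * (x * y) = (y * y) / (z * z) by field_simp, hy, hz]
      ring
  exact diag_of_symmetrizer _ _ _ Df hTS hST hM hA
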